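/- Define real polynomials P_n by P_0 = 1 and P_n(y) = (1 + (n+1)y + (n-1)y^2)P_{n-1}(y) + (y - y^3)P_{n-1}'(y). Then for every n ≥ 1, P_n has n distinct real roots, all lying in the open interval (−1, 0). -/

import Mathlib

open Polynomial Set

lemma algId (e y p0 p1 s t : ℝ) (hs : s * s = 1 + y) (hsne : s ≠ 0) :
    (-(e + 1/2) * t * -1 * s + t * (1 - y) * (1 / (2 * s) * 1)) * (y * p0)
      + t * (1 - y) * s * (1 * p0 + y * p1)
    = t * s⁻¹ * ((1 + (e+1) * y + (e-1) * y^2) * p0 + (y - y^3) * p1) := by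
  have hy : y = s * s - 1 := by linarith
  subst hy
  field_simp
  ring

lemma keyDeriv (e : ℝ) (p : Polynomial ℝ) {y : ℝ} (h1 : -1 < y) (h2 : y < 1) :
    HasDerivAt (fun x : ℝ => (1 - x) ^ (-(e + 1/2)) * Real.sqrt (1 + x) * (x * p.eval x))
      ((1 - y) ^ (-(e + 3/2)) * (Real.sqrt (1 + y))⁻¹ *
        (((1 + C (e+1) * X + C (e-1) * X^2) * p + (X - X^3) * derivative p).eval y)) y := by
  have hA : (0:ℝ) < 1 - y := by linarith
  have hB : (0:ℝ) < 1 + y := by linarith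
  have hs : Real.sqrt (1 + y) * Real.sqrt (1 + y) = 1 + y := Real.mul_self_sqrt hB.le
  have hsne : Real.sqrt (1 + y) ≠ 0 := by positivity
  have hlin : HasDerivAt (fun x : ℝ => 1 - x) (-1) y := by
    exact (hasDerivAt_id' y).const_sub 1
  have hu : HasDerivAt (fun x : ℝ => (1 - x) ^ (-(e + 1/2)))
      ((-(e + 1/2) * (1 - y) ^ (-(e + 1/2) - 1)) * (-1)) y :=
    (Real.hasDerivAt_rpow_const (p := -(e + 1/2)) (Or.inl hA.ne')).comp y hlin
  have hv : HasDerivAt (fun x : ℝ => Real.sqrt (1 + x)) (1 / (2 * Real.sqrt (1 + y)) * 1) y := by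
    exact (Real.hasDerivAt_sqrt hB.ne').comp y
      ((hasDerivAt_id' y).const_add 1)
  have hw : HasDerivAt (fun x : ℝ => x * p.eval x)
      (1 * p.eval y + y * (derivative p).eval y) y :=
    (hasDerivAt_id y).mul (p.hasDerivAt y)
  have H := (hu.mul hv).mul hw
  convert H using 1
  · rfl
  · rfl
  · rfl
  have hexp : (1 - y) ^ (-(e + 1/2)) = (1 - y) ^ (-(e + 3/2)) * (1 - y) := by
    rw [show -(e + 1/2) = -(e + 3/2) + 1 by ring, Real.rpow_add hA, Real.rpow_one]
  have hexp2 : (1 - y) ^ (-(e + 1/2) - 1) = (1 - y) ^ (-(e + 3/2)) := by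
    congr 1; ring
  simp only [Pi.mul_apply]
  rw [hexp2, hexp]
  simp only [eval_add, eval_mul, eval_one, eval_C, eval_X, eval_pow, eval_sub]
  exact (algId e y (p.eval y) ((derivative p).eval y) (Real.sqrt (1+y))
    ((1 - y) ^ (-(e + 3/2))) hs hsne).symm

lemma keyCont (e : ℝ) (p : Polynomial ℝ) :
    ContinuousOn (fun x : ℝ => (1 - x) ^ (-(e + 1/2)) * Real.sqrt (1 + x) * (x * p.eval x))
      (Set.Icc (-1) 0) := by
  apply ContinuousOn.mul
  · apply ContinuousOn.mul
    · apply ContinuousOn.rpow_const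
      · exact (continuous_const.sub continuous_id).continuousOn
      · intro x hx
        left
        have := hx.2
        simp only [Set.mem_Icc] at hx
        have : (0:ℝ) < 1 - x := by linarith [hx.2]
        exact this.ne'
    · exact (Real.continuous_sqrt.comp (continuous_const.add continuous_id)).continuousOn
  · exact (continuous_id.mul p.continuous_aeval).continuousOn

lemma rolleChain (g g' : ℝ → ℝ)
    (hcont : ContinuousOn g (Set.Icc (-1) 0))
    (hderiv : ∀ x ∈ Set.Ioo (-1:ℝ) 0, HasDerivAt g (g' x) x)
    (Z : Finset ℝ) (hZsub : ↑Z ⊆ Set.Icc (-1:ℝ) 0)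
    (hm1 : (-1:ℝ) ∈ Z) (hm0 : (0:ℝ) ∈ Z) (hg : ∀ x ∈ Z, g x = 0) :
    ∃ T : Finset ℝ, Z.card ≤ T.card + 1 ∧ ↑T ⊆ Set.Ioo (-1:ℝ) 0 ∧ ∀ x ∈ T, g' x = 0 := by
  classical
  set L := Z.sort (· ≤ ·) with hL
  have hsort : L.SortedLT := Z.sortedLT_sort
  have hlen : L.length = Z.card := Z.length_sort _
  have hmemL : ∀ x, x ∈ L ↔ x ∈ Z := fun x => Z.mem_sort _
  have hstrict : StrictMono L.get := hsort.strictMono_get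
  -- key: for each i : Fin (L.length - 1), find a root of g' between consecutive points
  have key : ∀ i : Fin (L.length - 1),
      ∃ c, c ∈ Set.Ioo (L.get ⟨i, by omega⟩) (L.get ⟨i+1, by omega⟩) ∧ g' c = 0 := by
    intro i
    have hi1 : (i : ℕ) < L.length := by omega
    have hi2 : (i : ℕ) + 1 < L.length := by omega
    set a := L.get ⟨i, hi1⟩
    set b := L.get ⟨i+1, hi2⟩
    have hab : a < b := hstrict (by simp [Fin.lt_def])
    have haZ : a ∈ Z := (hmemL a).1 (L.get_mem _)
    have hbZ : b ∈ Z := (hmemL b).1 (L.get_mem _)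
    have haI : a ∈ Set.Icc (-1:ℝ) 0 := hZsub haZ
    have hbI : b ∈ Set.Icc (-1:ℝ) 0 := hZsub hbZ
    have hsub : Set.Icc a b ⊆ Set.Icc (-1:ℝ) 0 :=
      Set.Icc_subset_Icc haI.1 hbI.2
    have hsub2 : Set.Ioo a b ⊆ Set.Ioo (-1:ℝ) 0 := fun x hx =>
      ⟨lt_of_le_of_lt haI.1 hx.1, lt_of_lt_of_le hx.2 hbI.2⟩
    obtain ⟨c, hc, hc0⟩ := exists_hasDerivAt_eq_zero hab (hcont.mono hsub)
      (by rw [hg a haZ, hg b hbZ]) (fun x hx => hderiv x (hsub2 hx))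
    exact ⟨c, hc, hc0⟩
  choose c hc hc0 using key
  have hcmono : StrictMono c := by
    intro i j hij
    calc c i < L.get ⟨(i:ℕ)+1, by omega⟩ := (hc i).2
      _ ≤ L.get ⟨(j:ℕ), by omega⟩ := hstrict.monotone (by simp [Fin.le_def]; omega)
      _ < c j := (hc j).1
  have hIoo : ∀ i, c i ∈ Set.Ioo (-1:ℝ) 0 := by
    intro i
    have hi1 : (i : ℕ) < L.length := by omega
    have hi2 : (i : ℕ) + 1 < L.length := by omega
    have haZ : L.get ⟨i, hi1⟩ ∈ Z := (hmemL _).1 (L.get_mem _)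
    have hbZ : L.get ⟨(i:ℕ)+1, hi2⟩ ∈ Z := (hmemL _).1 (L.get_mem _)
    exact ⟨lt_of_le_of_lt (hZsub haZ).1 (hc i).1, lt_of_lt_of_le (hc i).2 (hZsub hbZ).2⟩
  refine ⟨Finset.image c Finset.univ, ?_, ?_, ?_⟩
  · rw [Finset.card_image_of_injective _ hcmono.injective, Finset.card_univ, Fintype.card_fin]
    have h2 : 2 ≤ Z.card := by
      have := Finset.one_lt_card.mpr ⟨-1, hm1, 0, hm0, by norm_num⟩
      omega
    omega
  · intro x hx
    simp only [Finset.coe_image, Set.mem_image] at hx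
    obtain ⟨i, _, rfl⟩ := hx
    exact hIoo i
  · intro x hx
    simp only [Finset.mem_image] at hx
    obtain ⟨i, _, rfl⟩ := hx
    exact hc0 i

lemma degStep (m : ℕ) (hm : 1 ≤ m) (p : Polynomial ℝ) (hp : p.natDegree ≤ m - 1) :
    ((1 + C ((m:ℝ)+1) * X + C ((m:ℝ)-1) * X^2) * p
      + (X - X^3) * derivative p).natDegree ≤ m := by
  have hc : ∀ j, m - 1 < j → p.coeff j = 0 := natDegree_le_iff_coeff_eq_zero.mp hp
  rw [natDegree_le_iff_coeff_eq_zero]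
  intro N hN
  have hN2 : 2 ≤ N := by omega
  have expand : (1 + C ((m:ℝ)+1) * X + C ((m:ℝ)-1) * X^2) * p
      + (X - X^3) * derivative p
      = p + C ((m:ℝ)+1) * (p * X^1) + C ((m:ℝ)-1) * (p * X^2)
        + (derivative p * X^1) - (derivative p * X^3) := by ring
  rw [expand]
  simp only [coeff_add, coeff_sub, coeff_C_mul, coeff_mul_X_pow', coeff_derivative]
  have h1 : p.coeff N = 0 := hc N (by omega)
  have h2 : p.coeff (N-1) = 0 := hc _ (by omega)
  have e1 : N - 1 + 1 = N := by omega
  split_ifs with ha hb hc3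
  · rw [e1, h1, h2]
    have e2 : N - 3 + 1 = N - 2 := by omega
    rw [e2]
    by_cases hN3 : N = m + 1
    · have e3 : ((N - 3 : ℕ) : ℝ) + 1 = (m:ℝ) - 1 := by
        have : N - 3 = m - 2 := by omega
        rw [this]
        have hm2 : 2 ≤ m := by omega
        push_cast [Nat.cast_sub hm2]
        ring
      rw [e3]; ring
    · have : p.coeff (N - 2) = 0 := hc _ (by omega)
      rw [this]; ring
  · -- ¬ 3 ≤ N : N = 2, m = 1
    rw [e1, h1, h2]
    have hm1 : m = 1 := by omega
    subst hm1
    norm_num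
  · omega
  · omega

/-- if `P 0 = 1` and
`P n = (1 + (n+1)y + (n-1)y²) P (n-1) + (y - y³) P (n-1)'`, then for every
`n ≥ 1`, `P n` has exactly `n` distinct real roots, all lying in `(-1, 0)`. -/
theorem stmt5 (P : ℕ → Polynomial ℝ)
    (h0 : P 0 = 1)
    (hrec : ∀ n : ℕ, 1 ≤ n →
      P n = (1 + Polynomial.C ((n : ℝ) + 1) * Polynomial.X
              + Polynomial.C ((n : ℝ) - 1) * Polynomial.X ^ 2) * P (n - 1)
            + (Polynomial.X - Polynomial.X ^ 3) * Polynomial.derivative (P (n - 1)))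
    (n : ℕ) (hn : 1 ≤ n) :
    ∃ S : Finset ℝ, S.card = n ∧ ↑S ⊆ Set.Ioo (-1 : ℝ) 0 ∧
      ∀ x : ℝ, (P n).IsRoot x ↔ x ∈ S := by
  classical
  have heval : ∀ k, (P k).eval 0 = 1 := by
    intro k
    induction k with
    | zero => simp [h0]
    | succ k ih =>
      rw [hrec (k+1) (by omega)]
      simpa [Nat.add_sub_cancel] using ih
  have hPne : ∀ k, P k ≠ 0 := by
    intro k h
    have := heval k
    rw [h] at this
    simp at this
  have hdeg : ∀ k, (P k).natDegree ≤ k := by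
    intro k
    induction k with
    | zero => simp [h0]
    | succ k ih =>
      rw [hrec (k+1) (by omega)]
      simp only [Nat.add_sub_cancel]
      exact degStep (k+1) (by omega) (P k) (by simpa using ih)
  have key : ∀ k, ∃ S : Finset ℝ, S.card = k ∧ ↑S ⊆ Set.Ioo (-1:ℝ) 0 ∧
      ∀ x, (P k).IsRoot x ↔ x ∈ S := by
    intro k
    induction k with
    | zero =>
      refine ⟨∅, rfl, by simp, fun x => ?_⟩
      simp [h0, IsRoot]
    | succ k ih =>
      obtain ⟨S, hScard, hSsub, hSroot⟩ := ih
      have hq : P (k+1) = (1 + C (((k+1:ℕ):ℝ)+1) * X + C (((k+1:ℕ):ℝ)-1) * X^2) * P k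
          + (X - X^3) * derivative (P k) := by
        have h := hrec (k+1) (by omega)
        simpa only [Nat.add_sub_cancel] using h
      set e : ℝ := ((k+1 : ℕ) : ℝ) with he
      set g : ℝ → ℝ := fun x =>
        (1-x) ^ (-(e + 1/2)) * Real.sqrt (1+x) * (x * (P k).eval x) with hg
      set W : ℝ → ℝ := fun x =>
        (1-x) ^ (-(e + 3/2)) * (Real.sqrt (1+x))⁻¹ with hW
      have hderiv : ∀ x ∈ Set.Ioo (-1:ℝ) 0,
          HasDerivAt g (W x * (P (k+1)).eval x) x := by
        intro x hx
        have := keyDeriv e (P k) hx.1 (hx.2.trans one_pos)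
        rw [hq, hW, hg]
        simpa [mul_assoc] using this
      -- the zero set
      have h0S : (0:ℝ) ∉ S := fun h => by
        have := hSsub h; exact absurd this.2 (lt_irrefl 0)
      have hm1S : (-1:ℝ) ∉ insert (0:ℝ) S := by
        intro h
        rcases Finset.mem_insert.mp h with h | h
        · norm_num at h
        · have := hSsub h; linarith [this.1]
      set Z : Finset ℝ := insert (-1:ℝ) (insert 0 S) with hZ
      have hZcard : Z.card = k + 2 := by
        rw [hZ, Finset.card_insert_of_notMem hm1S, Finset.card_insert_of_notMem h0S, hScard]
      have hZsub : ↑Z ⊆ Set.Icc (-1:ℝ) 0 := by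
        intro x hx
        simp only [hZ, Finset.coe_insert, Set.mem_insert_iff] at hx
        rcases hx with rfl | rfl | hx
        · exact ⟨le_refl _, by norm_num⟩
        · exact ⟨by norm_num, le_refl _⟩
        · exact ⟨(hSsub hx).1.le, (hSsub hx).2.le⟩
      have hg0 : ∀ x ∈ Z, g x = 0 := by
        intro x hx
        rcases Finset.mem_insert.mp hx with rfl | hx
        · simp [hg]
        rcases Finset.mem_insert.mp hx with rfl | hx
        · simp [hg]
        · have : (P k).eval x = 0 := (hSroot x).mpr hx
          simp [hg, this]
      obtain ⟨T, hTcard, hTsub, hT0⟩ := rolleChain g (fun x => W x * (P (k+1)).eval x)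
        (keyCont e (P k)) hderiv Z hZsub (Finset.mem_insert_self _ _)
        (Finset.mem_insert_of_mem (Finset.mem_insert_self _ _)) hg0
      have hTroot : ∀ x ∈ T, (P (k+1)).IsRoot x := by
        intro x hx
        have hx' := hTsub hx
        have hWpos : 0 < W x := by
          rw [hW]
          have h1 : (0:ℝ) < 1 - x := by simp only [Set.mem_Ioo] at hx'; linarith [hx'.2]
          have h2 : (0:ℝ) < 1 + x := by simp only [Set.mem_Ioo] at hx'; linarith [hx'.1]
          positivity
        have hmul := hT0 x hx
        exact (mul_eq_zero.mp hmul).resolve_left hWpos.ne'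
      set R : Finset ℝ := (P (k+1)).roots.toFinset with hR
      have hTR : T ⊆ R := by
        intro x hx
        rw [hR, Multiset.mem_toFinset, mem_roots (hPne (k+1))]
        exact hTroot x hx
      have hRcard : R.card ≤ k + 1 := by
        calc R.card ≤ Multiset.card (P (k+1)).roots := (P (k+1)).roots.toFinset_card_le
          _ ≤ (P (k+1)).natDegree := (P (k+1)).card_roots'
          _ ≤ k + 1 := hdeg (k+1)
      have hTcard' : k + 1 ≤ T.card := by omega
      have hTeq : T = R := Finset.eq_of_subset_of_card_le hTR (by
        have := Finset.card_le_card hTR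
        omega)
      refine ⟨R, ?_, hTeq ▸ hTsub, fun x => ?_⟩
      · have := Finset.card_le_card hTR
        omega
      · rw [hR, Multiset.mem_toFinset, mem_roots (hPne (k+1))]
  exact key n
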